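/- Let p be a probability distribution on a finite set S of colors. The Method 1 distribution (P(X=i) = p_i^2/∑_j p_j^2) equals the Method 2 distribution (P(Y=i) proportional to p_i^2 ∑_k (k+1)! ∑_{J⊆S\{i},|J|=k} ∏_{j∈J} p_j) if and only if p is uniform on its support. -/

import Mathlib

open Finset

namespace Stmt4Aux

variable {ι : Type*} [DecidableEq ι]

noncomputable def E (p : ι → ℝ) (s : Finset ι) (k : ℕ) : ℝ :=
  ∑ J ∈ s.powersetCard k, ∏ l ∈ J, p l

lemma E_nonneg {p : ι → ℝ} (hnn : ∀ l, 0 ≤ p l) (s : Finset ι) (k : ℕ) :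
    0 ≤ E p s k :=
  Finset.sum_nonneg fun J _ => Finset.prod_nonneg fun l _ => hnn l

lemma E_zero (p : ι → ℝ) (s : Finset ι) : E p s 0 = 1 := by
  simp [E]

lemma E_insert (p : ι → ℝ) {a : ι} {s : Finset ι} (ha : a ∉ s) (k : ℕ) :
    E p (insert a s) (k + 1) = E p s (k + 1) + p a * E p s k := by
  unfold E
  rw [Finset.powersetCard_succ_insert ha, Finset.sum_union, Finset.sum_image, Finset.mul_sum]
  · congr 1
    refine Finset.sum_congr rfl fun J hJ => ?_
    rw [Finset.mem_powersetCard] at hJ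
    rw [Finset.prod_insert (fun h => ha (hJ.1 h))]
  · intro x hx y hy hxy
    rw [Finset.mem_coe, Finset.mem_powersetCard] at hx hy
    have hax : a ∉ x := fun h => ha (hx.1 h)
    have hay : a ∉ y := fun h => ha (hy.1 h)
    rw [← Finset.erase_insert hax, ← Finset.erase_insert hay, hxy]
  · rw [Finset.disjoint_left]
    intro J hJ hJ'
    rw [Finset.mem_powersetCard] at hJ
    rcases Finset.mem_image.1 hJ' with ⟨t, ht, rfl⟩
    exact ha (hJ.1 (Finset.mem_insert_self a t))

variable [Fintype ι]

noncomputable def F (p : ι → ℝ) (m : ι) : ℝ :=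
  ∑ k ∈ Finset.range (Fintype.card ι),
    (Nat.factorial (k + 1) : ℝ) * E p (Finset.univ.erase m) k

lemma F_ge_one {p : ι → ℝ} (hnn : ∀ l, 0 ≤ p l) (hcard : 1 ≤ Fintype.card ι) (m : ι) :
    1 ≤ F p m := by
  have h0 : (0 : ℕ) ∈ Finset.range (Fintype.card ι) := Finset.mem_range.2 hcard
  have := Finset.single_le_sum
    (f := fun k => (Nat.factorial (k + 1) : ℝ) * E p (Finset.univ.erase m) k)
    (fun k _ => mul_nonneg (by positivity) (E_nonneg hnn _ _)) h0
  simpa [F, E_zero] using this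

lemma F_sub {p : ι → ℝ} (hnn : ∀ l, 0 ≤ p l) {i j : ι} (hij : i ≠ j) :
    ∃ G : ℝ, F p i - F p j = (p j - p i) * G ∧ 2 ≤ G := by
  set A : Finset ι := (Finset.univ.erase i).erase j with hA
  have hjA : j ∉ A := Finset.notMem_erase _ _
  have hiA : i ∉ A := by
    rw [hA, Finset.erase_right_comm]; exact Finset.notMem_erase _ _
  have hins_j : insert j A = Finset.univ.erase i := by
    rw [hA, Finset.insert_erase]
    exact Finset.mem_erase.2 ⟨hij.symm, Finset.mem_univ _⟩
  have hins_i : insert i A = Finset.univ.erase j := by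
    rw [hA, Finset.erase_right_comm, Finset.insert_erase]
    exact Finset.mem_erase.2 ⟨hij, Finset.mem_univ _⟩
  have hcard : 2 ≤ Fintype.card ι := Fintype.one_lt_card_iff.2 ⟨i, j, hij⟩
  obtain ⟨m, hm⟩ : ∃ m, Fintype.card ι = m + 1 :=
    ⟨Fintype.card ι - 1, (Nat.succ_pred_eq_of_pos (by omega)).symm⟩
  have hm1 : 1 ≤ m := by omega
  have expand : ∀ (a b : ι), a ∉ A → insert a A = Finset.univ.erase b →
      F p b = ∑ k ∈ Finset.range m,
          (Nat.factorial (k + 2) : ℝ) * (E p A (k + 1) + p a * E p A k) + 1 := by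
    intro a b haA hins
    rw [F, ← hins, hm, Finset.sum_range_succ']
    congr 1
    · refine Finset.sum_congr rfl fun k _ => ?_
      rw [E_insert p haA k]
    · simp [E_zero]
  refine ⟨∑ k ∈ Finset.range m, (Nat.factorial (k + 2) : ℝ) * E p A k, ?_, ?_⟩
  · rw [expand j i hjA hins_j, expand i j hiA hins_i]
    rw [Finset.mul_sum]
    rw [add_sub_add_right_eq_sub, ← Finset.sum_sub_distrib]
    refine Finset.sum_congr rfl fun k _ => ?_
    ring
  · have h0 : (0 : ℕ) ∈ Finset.range m := Finset.mem_range.2 hm1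
    have := Finset.single_le_sum
      (f := fun k => (Nat.factorial (k + 2) : ℝ) * E p A k)
      (fun k _ => mul_nonneg (by positivity) (E_nonneg hnn _ _)) h0
    simpa [E_zero, Nat.factorial] using this


lemma F_eq_of_eq {p : ι → ℝ} (hnn : ∀ l, 0 ≤ p l) {i j : ι} (h : p i = p j) :
    F p i = F p j := by
  by_cases hij : i = j
  · rw [hij]
  · obtain ⟨G, hG, _⟩ := F_sub hnn hij
    have : F p i - F p j = 0 := by rw [hG, h]; ring
    linarith

lemma eq_of_F_eq {p : ι → ℝ} (hnn : ∀ l, 0 ≤ p l) {i j : ι} (hij : i ≠ j)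
    (h : F p i = F p j) : p i = p j := by
  obtain ⟨G, hG, hG2⟩ := F_sub hnn hij
  have h0 : (p j - p i) * G = 0 := by rw [← hG]; linarith
  rcases mul_eq_zero.1 h0 with h1 | h1
  · linarith
  · linarith

end Stmt4Aux

open Stmt4Aux in
theorem stmt_4 {ι : Type*} [Fintype ι] [DecidableEq ι] (p : ι → ℝ)
    (hnn : ∀ l, 0 ≤ p l) (hsum : ∑ l, p l = 1)
    (Q : ι → ℝ)
    (hQ : ∀ m, Q m = p m ^ 2 * ∑ k ∈ Finset.range (Fintype.card ι),
      (Nat.factorial (k + 1) : ℝ) *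
        ∑ J ∈ Finset.powersetCard k (Finset.univ.erase m), ∏ l ∈ J, p l) :
    (∀ i, p i ^ 2 / (∑ l, p l ^ 2) = Q i / (∑ l, Q l)) ↔
      (∀ i j, p i ≠ 0 → p j ≠ 0 → p i = p j) := by
  have hQF : ∀ m, Q m = p m ^ 2 * F p m := fun m => (hQ m).trans rfl
  have hne : Nonempty ι := by
    rcases isEmpty_or_nonempty ι with h | h
    · simp at hsum
    · exact h
  have hcard1 : 1 ≤ Fintype.card ι := Fintype.card_pos
  obtain ⟨w, hw⟩ : ∃ w, p w ≠ 0 := by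
    by_contra h
    push_neg at h
    simp [h] at hsum
  have hS : 0 < ∑ l, p l ^ 2 := by
    refine Finset.sum_pos' (fun l _ => sq_nonneg _) ⟨w, Finset.mem_univ _, ?_⟩
    positivity
  have hFpos : ∀ m, 0 < F p m := fun m =>
    lt_of_lt_of_le one_pos (F_ge_one hnn hcard1 m)
  have hT : 0 < ∑ l, Q l := by
    refine Finset.sum_pos' (fun l _ => ?_) ⟨w, Finset.mem_univ _, ?_⟩
    · rw [hQF]; exact mul_nonneg (sq_nonneg _) (hFpos l).le
    · rw [hQF]; exact mul_pos (by positivity) (hFpos w)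
  constructor
  · intro h i j hi hj
    by_cases hij : i = j
    · rw [hij]
    have key : ∀ a : ι, p a ≠ 0 → (∑ l, Q l) = F p a * (∑ l, p l ^ 2) := by
      intro a ha
      have := h a
      rw [div_eq_div_iff hS.ne' hT.ne', hQF a] at this
      have h2 : p a ^ 2 * (∑ l, Q l) = p a ^ 2 * (F p a * (∑ l, p l ^ 2)) := by
        linarith [this]
      exact mul_left_cancel₀ (by positivity) h2
    have hFij : F p i = F p j :=
      mul_right_cancel₀ hS.ne' ((key i hi).symm.trans (key j hj))
    exact eq_of_F_eq hnn hij hFij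
  · intro h i
    by_cases hi : p i = 0
    · simp [hQF, hi]
    · have hTeq : (∑ l, Q l) = (∑ l, p l ^ 2) * F p i := by
        rw [Finset.sum_mul]
        refine Finset.sum_congr rfl fun l _ => ?_
        rw [hQF l]
        by_cases hl : p l = 0
        · simp [hl]
        · rw [F_eq_of_eq hnn (h l i hl hi)]
      rw [hQF i, hTeq, mul_div_mul_right _ _ (hFpos i).ne']
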